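/- With a_n = ⌊log n / log 2⌋, b_n = ⌊log n / log 2⌋ + 2{n/2}, c_n = d_n = ⌊n/2⌋ − ⌊log n / log 2⌋, and t_n = C(n; a_n, b_n, c_n, d_n) · (1/2)^{a_n + c_n} (1/2)^{b_n + d_n} (1/2)^{a_n b_n} (1 − 2^{−a_n})^{d_n} (1 − 2^{−b_n})^{c_n}, one has the asymptotic equivalence log t_n = (log² n / log 2) · (1 + o(1)) as n → ∞; that is, (log t_n) / (log² n / log 2) → 1 as n → ∞. -/

import Mathlib

open Real Filter Nat

private lemma sixteen_mul_le_two_pow : ∀ a : ℕ, 16 ≤ a → 16 * a ≤ 2 ^ a := by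
  intro a ha
  induction a with
  | zero => omega
  | succ k ih =>
    rcases Nat.lt_or_ge k 16 with h | h
    · have hk : k = 15 := by omega
      subst hk; norm_num
    · have h1 := ih h
      have h2 : 16 ≤ 2 ^ k := le_trans (by omega) h1
      have : 2 ^ (k + 1) = 2 ^ k + 2 ^ k := by ring
      omega

private lemma neg_two_mul_le_log_one_sub {x : ℝ} (h0 : 0 ≤ x) (h1 : x ≤ 1/2) :
    -(2*x) ≤ Real.log (1 - x) := by
  have hx : 0 < 1 - x := by linarith
  have h2 := Real.log_le_sub_one_of_pos (show (0:ℝ) < (1-x)⁻¹ by positivity)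
  rw [Real.log_inv] at h2
  have h3 : (1-x)⁻¹ - 1 ≤ 2*x := by
    rw [inv_eq_one_div, div_sub' hx.ne', div_le_iff₀ hx]
    nlinarith
  linarith

private lemma log_choose_le {n k : ℕ} (hk : k ≤ n) (hn : 1 ≤ n) :
    Real.log (n.choose k) ≤ k * Real.log n := by
  have h1 : (n.choose k : ℝ) ≤ (n : ℝ) ^ k := by exact_mod_cast Nat.choose_le_pow n k
  have h2 : (0:ℝ) < n.choose k := by exact_mod_cast Nat.choose_pos hk
  calc Real.log (n.choose k) ≤ Real.log ((n:ℝ)^k) := Real.log_le_log h2 h1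
    _ = k * Real.log n := Real.log_pow n k

private lemma log_choose_ge {n k : ℕ} (hk1 : 1 ≤ k) (hkn : k ≤ n) :
    (k:ℝ) * Real.log ((n + 1 - k : ℕ) : ℝ) - k * Real.log k ≤ Real.log (n.choose k) := by
  have hkf : (0:ℝ) < (k ! : ℝ) := by positivity
  have h1 : (((n + 1 - k : ℕ) ^ k : ℕ) : ℝ) / (k ! : ℝ) ≤ (n.choose k : ℝ) := by
    have := Nat.pow_le_choose (α := ℝ) k n
    push_cast at this ⊢
    convert this using 2
  have hbase : (1:ℕ) ≤ n + 1 - k := by omega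
  have hpow : (0:ℝ) < (((n + 1 - k : ℕ) ^ k : ℕ) : ℝ) := by
    have : (1:ℕ) ≤ (n + 1 - k) ^ k := Nat.one_le_pow _ _ (by omega)
    exact_mod_cast Nat.lt_of_lt_of_le Nat.zero_lt_one this
  have hq : (0:ℝ) < (((n + 1 - k : ℕ) ^ k : ℕ) : ℝ) / (k ! : ℝ) := by positivity
  have h2 : Real.log ((((n + 1 - k : ℕ) ^ k : ℕ) : ℝ) / (k ! : ℝ)) ≤ Real.log (n.choose k) :=
    Real.log_le_log hq h1
  have h3 : Real.log ((((n + 1 - k : ℕ) ^ k : ℕ) : ℝ) / (k ! : ℝ))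
      = k * Real.log ((n + 1 - k : ℕ) : ℝ) - Real.log (k ! : ℝ) := by
    rw [Real.log_div hpow.ne' hkf.ne']
    congr 1
    push_cast
    rw [Real.log_pow]
  have h4 : Real.log (k ! : ℝ) ≤ k * Real.log k := by
    have hf : (k ! : ℝ) ≤ (k:ℝ)^k := by exact_mod_cast Nat.factorial_le_pow k
    calc Real.log (k ! : ℝ) ≤ Real.log ((k:ℝ)^k) := Real.log_le_log hkf hf
      _ = k * Real.log k := Real.log_pow k k
  linarith

/-- `a_n = ⌊log n / log 2⌋` (integer part; `log` is the natural logarithm). -/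
noncomputable def aSeq (n : ℕ) : ℕ := ⌊Real.log n / Real.log 2⌋₊

/-- `b_n = ⌊log n / log 2⌋ + 2{n/2}`, where `2{n/2}` is `0` if `n` is even and `1` if odd. -/
noncomputable def bSeq (n : ℕ) : ℕ := aSeq n + n % 2

/-- `c_n = d_n = ⌊n/2⌋ − ⌊log n / log 2⌋`. -/
noncomputable def cSeq (n : ℕ) : ℕ := n / 2 - aSeq n

/-- The multinomial coefficient `C(n; a_n, b_n, c_n, d_n) = n!/(a_n! b_n! c_n! d_n!)`
(the subtraction `c_n = ⌊n/2⌋ − a_n` is exact and `a_n + b_n + c_n + d_n = n`). -/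
noncomputable def multinomialSeq (n : ℕ) : ℝ :=
  (n.factorial : ℝ) /
    ((aSeq n).factorial * (bSeq n).factorial * (cSeq n).factorial * (cSeq n).factorial)

/-- The singled-out term
`t_n = C(n; a_n,b_n,c_n,d_n) (1/2)^{a_n+c_n} (1/2)^{b_n+d_n} (1/2)^{a_n b_n}
       (1 − 2^{−a_n})^{d_n} (1 − 2^{−b_n})^{c_n}` with `d_n = c_n`. -/
noncomputable def tSeq (n : ℕ) : ℝ :=
  multinomialSeq n *
    ((1 / 2 : ℝ) ^ (aSeq n + cSeq n) * (1 / 2 : ℝ) ^ (bSeq n + cSeq n) *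
      (1 / 2 : ℝ) ^ (aSeq n * bSeq n) *
      (1 - (2 : ℝ) ^ (-(aSeq n : ℤ))) ^ cSeq n *
      (1 - (2 : ℝ) ^ (-(bSeq n : ℤ))) ^ cSeq n)

private lemma mult_eq {n : ℕ} (h : aSeq n + bSeq n + 2 * cSeq n = n) :
    multinomialSeq n = (n.choose (aSeq n) : ℝ) * ((n - aSeq n).choose (bSeq n) : ℝ)
      * ((2 * cSeq n).choose (cSeq n) : ℝ) := by
  set a := aSeq n with ha'
  set b := bSeq n with hb'
  set c := cSeq n with hc'
  have ha : a ≤ n := by omega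
  have hb : b ≤ n - a := by omega
  have e1 := Nat.choose_mul_factorial_mul_factorial ha
  have e2 := Nat.choose_mul_factorial_mul_factorial hb
  have e3 := Nat.choose_mul_factorial_mul_factorial (show c ≤ 2 * c by omega)
  have h2c : 2 * c - c = c := by omega
  rw [h2c] at e3
  have hnab : n - a - b = 2 * c := by omega
  rw [hnab] at e2
  have key : n ! = n.choose a * (n - a).choose b * (2*c).choose c
      * (a ! * b ! * (c ! * c !)) := by
    calc n ! = n.choose a * a ! * (n - a)! := e1.symm
      _ = n.choose a * a ! * ((n-a).choose b * b ! * (2*c)!) := by rw [e2]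
      _ = n.choose a * a ! * ((n-a).choose b * b ! * ((2*c).choose c * c ! * c !)) := by rw [e3]
      _ = _ := by ring
  rw [multinomialSeq]
  rw [div_eq_iff (by positivity)]
  rw [key]
  push_cast
  ring

private lemma log_tSeq_eq {n : ℕ} (h : aSeq n + bSeq n + 2 * cSeq n = n)
    (ha1 : 1 ≤ aSeq n) :
    Real.log (tSeq n) = Real.log (n.choose (aSeq n))
      + Real.log ((n - aSeq n).choose (bSeq n))
      + Real.log ((2 * cSeq n).choose (cSeq n))
      - ((aSeq n : ℝ) + cSeq n) * Real.log 2 - ((bSeq n : ℝ) + cSeq n) * Real.log 2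
      - ((aSeq n : ℝ) * bSeq n) * Real.log 2
      + (cSeq n : ℝ) * Real.log (1 - ((2:ℝ)^(aSeq n))⁻¹)
      + (cSeq n : ℝ) * Real.log (1 - ((2:ℝ)^(bSeq n))⁻¹) := by
  have hb0 : bSeq n = aSeq n + n % 2 := rfl
  set a := aSeq n with ha'
  set b := bSeq n with hb'
  set c := cSeq n with hc'
  have hb1 : 1 ≤ b := by omega
  have hza : (2:ℝ) ^ (-(a : ℤ)) = ((2:ℝ)^a)⁻¹ := by
    rw [zpow_neg, zpow_natCast]
  have hzb : (2:ℝ) ^ (-(b : ℤ)) = ((2:ℝ)^b)⁻¹ := by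
    rw [zpow_neg, zpow_natCast]
  have hxa : ((2:ℝ)^a)⁻¹ ≤ 1/2 := by
    rw [inv_le_comm₀ (by positivity) (by norm_num)]
    calc (1/2:ℝ)⁻¹ = 2^(1:ℕ) := by norm_num
      _ ≤ 2^a := by apply pow_le_pow_right₀ (by norm_num) ha1
  have hxb : ((2:ℝ)^b)⁻¹ ≤ 1/2 := by
    rw [inv_le_comm₀ (by positivity) (by norm_num)]
    calc (1/2:ℝ)⁻¹ = 2^(1:ℕ) := by norm_num
      _ ≤ 2^b := by apply pow_le_pow_right₀ (by norm_num) hb1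
  have hpa : (0:ℝ) < 1 - ((2:ℝ)^a)⁻¹ := by
    have : (0:ℝ) < ((2:ℝ)^a)⁻¹ := by positivity
    linarith
  have hpb : (0:ℝ) < 1 - ((2:ℝ)^b)⁻¹ := by
    have : (0:ℝ) < ((2:ℝ)^b)⁻¹ := by positivity
    linarith
  have hC1 : (0:ℝ) < (n.choose a : ℝ) := by exact_mod_cast Nat.choose_pos (show a ≤ n by omega)
  have hC2 : (0:ℝ) < ((n - a).choose b : ℝ) := by
    exact_mod_cast Nat.choose_pos (show b ≤ n - a by omega)
  have hC3 : (0:ℝ) < ((2*c).choose c : ℝ) := by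
    exact_mod_cast Nat.choose_pos (show c ≤ 2*c by omega)
  rw [tSeq, mult_eq h, hza, hzb]
  rw [show (n.choose a : ℝ) * ((n - a).choose b : ℝ) * ((2 * c).choose c : ℝ) *
      ((1 / 2 : ℝ) ^ (a + c) * (1 / 2 : ℝ) ^ (b + c) * (1 / 2 : ℝ) ^ (a * b) *
        (1 - ((2:ℝ)^a)⁻¹) ^ c * (1 - ((2:ℝ)^b)⁻¹) ^ c)
    = (n.choose a : ℝ) * (((n - a).choose b : ℝ) * (((2 * c).choose c : ℝ) *
      ((1 / 2 : ℝ) ^ (a + c) * ((1 / 2 : ℝ) ^ (b + c) * ((1 / 2 : ℝ) ^ (a * b) *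
        ((1 - ((2:ℝ)^a)⁻¹) ^ c * (1 - ((2:ℝ)^b)⁻¹) ^ c)))))) from by ring]
  rw [Real.log_mul (by positivity) (by positivity),
      Real.log_mul (by positivity) (by positivity),
      Real.log_mul (by positivity) (by positivity),
      Real.log_mul (by positivity) (by positivity),
      Real.log_mul (by positivity) (by positivity),
      Real.log_mul (by positivity) (by positivity),
      Real.log_mul (by positivity) (by positivity)]
  rw [Real.log_pow, Real.log_pow, Real.log_pow, Real.log_pow, Real.log_pow]
  rw [one_div, Real.log_inv]
  push_cast
  ring

private lemma quad_core {L lam u v : ℝ} (hlam0 : 0 < lam) (hlam2 : lam ≤ 0.7) (hL : 69 ≤ L)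
    (hu0 : 0 ≤ u) (hu1 : u ≤ L) (hu2 : L < u + lam) (hv1 : u ≤ v) (hv2 : v ≤ u + lam) :
    -(6*L*lam) ≤ (u+v)*L - (u+v)*lam - u*v - L^2 ∧
      (u+v)*L - (u+v)*lam - u*v - L^2 ≤ 3*L*lam := by
  constructor
  · have hP4 : (2*(L-lam))*L ≤ (u+v)*L :=
      mul_le_mul_of_nonneg_right (by linarith) (by linarith)
    have hP5 : u*v ≤ L*(L+lam) :=
      mul_le_mul (by linarith) (by linarith) (by linarith) (by linarith)
    have hP6 : (u+v)*lam ≤ (2*L+lam)*lam :=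
      mul_le_mul_of_nonneg_right (by linarith) (by linarith)
    nlinarith
  · have hP1 : (u+v)*L ≤ (2*L+lam)*L :=
      mul_le_mul_of_nonneg_right (by linarith) (by linarith)
    have hP2 : (L-lam)*(L-lam) ≤ u*v :=
      mul_le_mul (by linarith) (by linarith) (by linarith) (by linarith)
    have hP3 : 0 ≤ (u+v)*lam := mul_nonneg (by linarith) (by linarith)
    nlinarith

private lemma final_combination
    {L lam LL A B C lC1 lC2 lC3 Ta Tb lgA lgB : ℝ}
    (hlam1 : 0.69 ≤ lam) (hlam2 : lam ≤ 0.7)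
    (hL69 : 69 ≤ L) (hLL4 : 4 ≤ LL)
    (hA0 : 0 ≤ A) (hA1 : A*lam ≤ L) (hA2 : L < (A+1)*lam)
    (hB1 : A ≤ B) (hB2 : B ≤ A + 1) (hC0 : 0 ≤ C)
    (hC1u : lC1 ≤ A*L) (hC1l : A*L - A*lam - A*lgA ≤ lC1)
    (hC2u : lC2 ≤ B*L) (hC2l : B*L - B*lam - B*lgB ≤ lC2)
    (hC3u : lC3 ≤ 2*C*lam) (hC3l : 2*C*lam - L ≤ lC3)
    (hAlgA : A*lgA ≤ 4*L*LL) (hBlgB : B*lgB ≤ 4*L*LL)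
    (hTa1 : -2 ≤ Ta) (hTa2 : Ta ≤ 0) (hTb1 : -2 ≤ Tb) (hTb2 : Tb ≤ 0) :
    |lC1 + lC2 + lC3 - (A+C)*lam - (B+C)*lam - A*B*lam + Ta + Tb - L^2/lam| ≤ 20*L*LL := by
  have hlam0 : (0:ℝ) < lam := by linarith
  have hL0 : (0:ℝ) < L := by linarith
  have hu2 : L < A*lam + lam := by nlinarith
  have hv1 : A*lam ≤ B*lam := mul_le_mul_of_nonneg_right hB1 hlam0.le
  have hv2 : B*lam ≤ A*lam + lam := by nlinarith [mul_le_mul_of_nonneg_right hB2 hlam0.le]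
  have hq := quad_core hlam0 hlam2 hL69 (by positivity : (0:ℝ) ≤ A*lam) hA1 hu2 hv1 hv2
  have hPdiv : ((A*lam + B*lam)*L - (A*lam + B*lam)*lam - (A*lam)*(B*lam) - L^2) / lam
      = A*L + B*L - A*lam - B*lam - A*B*lam - L^2/lam := by
    field_simp; ring
  have hEu : ((A*lam + B*lam)*L - (A*lam + B*lam)*lam - (A*lam)*(B*lam) - L^2) / lam ≤ 3*L :=
    (div_le_iff₀ hlam0).mpr hq.2
  have hEl : -(6*L) ≤ ((A*lam + B*lam)*L - (A*lam + B*lam)*lam - (A*lam)*(B*lam) - L^2) / lam :=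
    (le_div_iff₀ hlam0).mpr (by linarith [hq.1])
  rw [hPdiv] at hEu hEl
  have hLLL : 4 * L ≤ L * LL := by nlinarith [mul_le_mul_of_nonneg_left hLL4 hL0.le]
  have hBlam : B*lam ≤ L + lam := by linarith
  rw [abs_le]
  constructor
  · linarith [hC1l, hC2l, hC3l, hTa1, hTb1, hEl, hAlgA, hBlgB, hLLL]
  · linarith [hC1u, hC2u, hC3u, hTa2, hTb2, hEu, hLLL]

set_option maxHeartbeats 2000000 in
private lemma key_bound : ∀ᶠ n : ℕ in atTop,
    |Real.log (tSeq n) - (Real.log n)^2 / Real.log 2|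
      ≤ 20 * Real.log n * Real.log (Real.log n) := by
  filter_upwards [eventually_ge_atTop (2^100)] with n hn
  have hb0 : bSeq n = aSeq n + n % 2 := rfl
  have hc0 : cSeq n = n / 2 - aSeq n := rfl
  have ha0 : aSeq n = ⌊Real.log n / Real.log 2⌋₊ := rfl
  set a := aSeq n with ha'
  set b := bSeq n with hb'
  set c := cSeq n with hc'
  have hn1 : (1:ℕ) ≤ n := le_trans (by norm_num) hn
  have hn1000 : (1000:ℕ) ≤ n := le_trans (by norm_num) hn
  have hnpos : (0:ℝ) < n := by exact_mod_cast hn1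
  have hnR : (2:ℝ)^(100:ℕ) ≤ (n:ℝ) := by exact_mod_cast hn
  clear hn
  set L := Real.log n with hL'
  set lam := Real.log 2 with hlam'
  have hlam1 : 0.6931471803 < lam := Real.log_two_gt_d9
  have hlam2 : lam < 0.6931471808 := Real.log_two_lt_d9
  have hlam0 : (0:ℝ) < lam := by linarith
  have hL100 : 100 * lam ≤ L := by
    have h := Real.log_le_log (by positivity) hnR
    rwa [Real.log_pow] at h
  clear hnR
  have hL69 : (69:ℝ) ≤ L := by linarith
  have hLpos : (0:ℝ) < L := by linarith
  set LL := Real.log L with hLL'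
  have hLL4 : (4:ℝ) ≤ LL := by
    have he : Real.exp 4 ≤ 69 := by
      have h1 : Real.exp 1 < 2.7182818286 := Real.exp_one_lt_d9
      have h2 : Real.exp 4 = (Real.exp 1)^(4:ℕ) := by
        rw [← Real.exp_nat_mul]; norm_num
      have h3 : (Real.exp 1)^(4:ℕ) ≤ (2.7182818286:ℝ)^(4:ℕ) :=
        pow_le_pow_left₀ (Real.exp_pos 1).le h1.le 4
      have h4 : (2.7182818286:ℝ)^(4:ℕ) ≤ 69 := by norm_num
      linarith
    calc (4:ℝ) = Real.log (Real.exp 4) := (Real.log_exp 4).symm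
      _ ≤ LL := Real.log_le_log (Real.exp_pos 4) (he.trans hL69)
  have hLLpos : (0:ℝ) < LL := by linarith
  -- floor bounds
  have hA1 : (a:ℝ) * lam ≤ L := by
    have h := Nat.floor_le (show (0:ℝ) ≤ L / lam by positivity)
    rw [← ha0] at h
    calc (a:ℝ) * lam ≤ (L / lam) * lam := by
          exact mul_le_mul_of_nonneg_right h hlam0.le
      _ = L := by field_simp
  have hA2 : L < ((a:ℝ) + 1) * lam := by
    have h := Nat.lt_floor_add_one (L / lam)
    rw [← ha0] at h
    calc L = (L / lam) * lam := by field_simp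
      _ < ((a:ℝ) + 1) * lam := by
          exact mul_lt_mul_of_pos_right h hlam0
  have hA100 : 100 ≤ a := by
    rw [ha0]
    apply Nat.le_floor
    rw [le_div_iff₀ hlam0]
    push_cast
    linarith
  have hA100R : (100:ℝ) ≤ (a:ℝ) := by exact_mod_cast hA100
  have hApos : (0:ℝ) ≤ (a:ℝ) := by linarith
  -- 2^a ≤ n
  have h2an : (2:ℕ)^a ≤ n := by
    have hx : ((2:ℝ)^a) ≤ n := by
      have h1 : Real.log ((2:ℝ)^a) = a * lam := by rw [Real.log_pow]
      have h2 : ((2:ℝ)^a) = Real.exp (a * lam) := by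
        rw [← h1, Real.exp_log (by positivity)]
      have h3 : (n:ℝ) = Real.exp L := by rw [hL', Real.exp_log hnpos]
      rw [h2, h3]
      exact Real.exp_le_exp.mpr hA1
    exact_mod_cast hx
  have h16a : 16 * a ≤ n := le_trans (sixteen_mul_le_two_pow a (by omega)) h2an
  have h16aR : 16 * (a:ℝ) ≤ n := by exact_mod_cast h16a
  have hsum : a + b + 2 * c = n := by omega
  have hc4 : 4 ≤ c := by omega
  have hbn : b ≤ n - a := by omega
  have han : a ≤ n := by omega
  have hsumR : (a:ℝ) + b + 2 * c = n := by exact_mod_cast hsum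
  have hBA1 : (a:ℝ) ≤ b := by
    have : a ≤ b := by omega
    exact_mod_cast this
  have hBA2 : (b:ℝ) ≤ a + 1 := by
    have : b ≤ a + 1 := by omega
    exact_mod_cast this
  have hBpos : (0:ℝ) ≤ (b:ℝ) := by linarith
  have hCpos : (0:ℝ) ≤ (c:ℝ) := by positivity
  -- size bounds
  have hA2L : (a:ℝ) ≤ 2 * L := by nlinarith
  have hB2L : (b:ℝ) ≤ 2 * L := by nlinarith
  have hB1lam : (b:ℝ) * lam ≤ L + lam := by
    have h := mul_le_mul_of_nonneg_right hBA2 hlam0.le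
    nlinarith
  have hlogA : Real.log a ≤ 2 * LL := by
    have h1 : Real.log a ≤ Real.log (2 * L) := Real.log_le_log (by linarith) (by linarith)
    rw [Real.log_mul (by norm_num) hLpos.ne'] at h1
    rw [← hlam'] at h1
    linarith
  have hlogB : Real.log b ≤ 2 * LL := by
    have h1 : Real.log b ≤ Real.log (2 * L) := Real.log_le_log (by linarith) (by linarith)
    rw [Real.log_mul (by norm_num) hLpos.ne'] at h1
    rw [← hlam'] at h1
    linarith
  have hAlogA : (a:ℝ) * Real.log a ≤ 4 * L * LL := by
    calc (a:ℝ) * Real.log a ≤ (a:ℝ) * (2 * LL) := mul_le_mul_of_nonneg_left hlogA hApos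
      _ ≤ (2 * L) * (2 * LL) := mul_le_mul_of_nonneg_right hA2L (by linarith)
      _ = 4 * L * LL := by ring
  have hBlogB : (b:ℝ) * Real.log b ≤ 4 * L * LL := by
    calc (b:ℝ) * Real.log b ≤ (b:ℝ) * (2 * LL) := mul_le_mul_of_nonneg_left hlogB hBpos
      _ ≤ (2 * L) * (2 * LL) := mul_le_mul_of_nonneg_right hB2L (by linarith)
      _ = 4 * L * LL := by ring
  -- choose bounds
  have hC1u : Real.log (n.choose a) ≤ (a:ℝ) * L := log_choose_le han hn1
  have hC1l : (a:ℝ) * L - a * lam - a * Real.log a ≤ Real.log (n.choose a) := by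
    have h1 := log_choose_ge (show 1 ≤ a by omega) han
    have h2 : (n:ℝ) / 2 ≤ ((n + 1 - a : ℕ) : ℝ) := by
      rw [Nat.cast_sub (by omega)]
      push_cast
      linarith
    have h3 : L - lam ≤ Real.log ((n + 1 - a : ℕ) : ℝ) := by
      have h4 : Real.log ((n:ℝ)/2) ≤ Real.log ((n + 1 - a : ℕ) : ℝ) :=
        Real.log_le_log (by positivity) h2
      rw [Real.log_div hnpos.ne' (by norm_num)] at h4
      rw [← hL', ← hlam'] at h4
      linarith
    have h5 : (a:ℝ) * (L - lam) ≤ (a:ℝ) * Real.log ((n + 1 - a : ℕ) : ℝ) :=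
      mul_le_mul_of_nonneg_left h3 hApos
    nlinarith
  have hC2u : Real.log ((n - a).choose b) ≤ (b:ℝ) * L := by
    have h1 := log_choose_le hbn (show 1 ≤ n - a by omega)
    have h2 : Real.log ((n - a : ℕ) : ℝ) ≤ L := by
      apply Real.log_le_log (by exact_mod_cast Nat.lt_of_lt_of_le Nat.zero_lt_one (show 1 ≤ n - a by omega))
      exact_mod_cast Nat.sub_le n a
    nlinarith [mul_le_mul_of_nonneg_left h2 hBpos]
  have hC2l : (b:ℝ) * L - b * lam - b * Real.log b ≤ Real.log ((n - a).choose b) := by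
    have h1 := log_choose_ge (show 1 ≤ b by omega) hbn
    have he : (n - a) + 1 - b = 2 * c + 1 := by omega
    rw [he] at h1
    have h2 : (n:ℝ) / 2 ≤ ((2 * c + 1 : ℕ) : ℝ) := by
      push_cast
      linarith
    have h3 : L - lam ≤ Real.log ((2 * c + 1 : ℕ) : ℝ) := by
      have h4 : Real.log ((n:ℝ)/2) ≤ Real.log ((2 * c + 1 : ℕ) : ℝ) :=
        Real.log_le_log (by positivity) h2
      rw [Real.log_div hnpos.ne' (by norm_num)] at h4
      rw [← hL', ← hlam'] at h4
      linarith
    have h5 : (b:ℝ) * (L - lam) ≤ (b:ℝ) * Real.log ((2 * c + 1 : ℕ) : ℝ) :=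
      mul_le_mul_of_nonneg_left h3 hBpos
    nlinarith
  have hC3u : Real.log ((2*c).choose c) ≤ 2 * (c:ℝ) * lam := by
    have h1 : (2*c).choose c ≤ 4 ^ c :=
      le_trans (Nat.choose_le_choose c (by omega)) (Nat.choose_middle_le_pow c)
    have h2 : (0:ℝ) < ((2*c).choose c : ℝ) := by
      exact_mod_cast Nat.choose_pos (show c ≤ 2*c by omega)
    have h3 : Real.log ((2*c).choose c) ≤ Real.log ((4:ℝ)^c) := by
      apply Real.log_le_log h2
      exact_mod_cast h1
    rw [Real.log_pow] at h3
    have h4 : Real.log (4:ℝ) = 2 * lam := by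
      rw [show (4:ℝ) = 2^(2:ℕ) by norm_num, Real.log_pow]
      push_cast; ring
    rw [h4] at h3
    linarith
  have hC3l : 2 * (c:ℝ) * lam - L ≤ Real.log ((2*c).choose c) := by
    have h1 : 4 ^ c ≤ c * (2*c).choose c := by
      have h := Nat.four_pow_lt_mul_centralBinom c hc4
      rw [Nat.centralBinom] at h
      omega
    have h1R : (4:ℝ)^c ≤ (c:ℝ) * ((2*c).choose c : ℝ) := by exact_mod_cast h1
    have h2 : (0:ℝ) < ((2*c).choose c : ℝ) := by
      exact_mod_cast Nat.choose_pos (show c ≤ 2*c by omega)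
    have hcR : (0:ℝ) < (c:ℝ) := by exact_mod_cast Nat.lt_of_lt_of_le Nat.zero_lt_one (by omega)
    have h3 : (4:ℝ)^c / c ≤ ((2*c).choose c : ℝ) := by
      rw [div_le_iff₀ hcR]; linarith [h1R]
    have h4 : Real.log ((4:ℝ)^c / c) ≤ Real.log ((2*c).choose c) :=
      Real.log_le_log (by positivity) h3
    rw [Real.log_div (by positivity) hcR.ne', Real.log_pow] at h4
    have h5 : Real.log (4:ℝ) = 2 * lam := by
      rw [show (4:ℝ) = 2^(2:ℕ) by norm_num, Real.log_pow]
      push_cast; ring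
    rw [h5] at h4
    have h6 : Real.log c ≤ L := by
      apply Real.log_le_log hcR
      exact_mod_cast (by omega : c ≤ n)
    nlinarith
  -- the 1 - 2^{-a} terms
  have hxabound : ∀ k : ℕ, a ≤ k → -2 ≤ (c:ℝ) * Real.log (1 - ((2:ℝ)^k)⁻¹) ∧
      (c:ℝ) * Real.log (1 - ((2:ℝ)^k)⁻¹) ≤ 0 := by
    intro k hk
    set x := ((2:ℝ)^k)⁻¹ with hx'
    have hx0 : 0 < x := by positivity
    have hxa : x ≤ ((2:ℝ)^a)⁻¹ := by
      apply inv_anti₀ (by positivity)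
      exact pow_le_pow_right₀ (by norm_num) hk
    have h2n : (n:ℝ) < 2 * (2:ℝ)^a := by
      have h1 : Real.log ((2:ℝ)^(a+1)) = ((a:ℝ)+1) * lam := by
        rw [Real.log_pow]; push_cast; ring
      have h2 : (n:ℝ) = Real.exp L := by rw [hL', Real.exp_log hnpos]
      have h3 : ((2:ℝ)^(a+1)) = Real.exp (((a:ℝ)+1) * lam) := by
        rw [← h1, Real.exp_log (by positivity)]
      have h4 : (n:ℝ) < (2:ℝ)^(a+1) := by
        rw [h2, h3]; exact Real.exp_lt_exp.mpr hA2
      calc (n:ℝ) < (2:ℝ)^(a+1) := h4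
        _ = 2 * (2:ℝ)^a := by ring
    have hxn : x ≤ 2 / n := by
      have h1 : ((2:ℝ)^a)⁻¹ ≤ 2 / n := by
        rw [inv_le_iff_one_le_mul₀ (by positivity)]
        rw [div_mul_eq_mul_div, le_div_iff₀ hnpos]
        linarith
      linarith
    have hxhalf : x ≤ 1/2 := by
      have : ((2:ℝ)^a)⁻¹ ≤ 1/2 := by
        rw [inv_le_comm₀ (by positivity) (by norm_num)]
        calc (1/2:ℝ)⁻¹ = 2^(1:ℕ) := by norm_num
          _ ≤ 2^a := by apply pow_le_pow_right₀ (by norm_num) (by omega)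
      linarith
    have hlog0 : Real.log (1 - x) ≤ 0 := Real.log_nonpos (by linarith) (by linarith)
    have hlogl : -(2*x) ≤ Real.log (1 - x) := neg_two_mul_le_log_one_sub hx0.le hxhalf
    constructor
    · have h1 : (c:ℝ) * (-(2*x)) ≤ (c:ℝ) * Real.log (1-x) :=
        mul_le_mul_of_nonneg_left hlogl hCpos
      have h2 : (c:ℝ) * x ≤ ((n:ℝ)/2) * (2/n) := by
        apply mul_le_mul (by linarith) hxn hx0.le (by positivity)
      have h3 : ((n:ℝ)/2) * (2/n) = 1 := by field_simp
      nlinarith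
    · exact mul_nonpos_of_nonneg_of_nonpos hCpos hlog0
  have hTa := hxabound a le_rfl
  have hTb := hxabound b (by omega)
  -- final combination
  rw [log_tSeq_eq hsum (by omega)]
  rw [← hlam']
  exact final_combination (by linarith) (by linarith) hL69 hLL4 hApos hA1
    hA2 hBA1 hBA2 hCpos hC1u hC1l hC2u hC2l hC3u hC3l
    hAlogA hBlogB hTa.1 hTa.2 hTb.1 hTb.2

/-- `log t_n = (log² n / log 2)(1 + o(1))` as `n → ∞`; that is,
`(log t_n)/(log² n / log 2) → 1`. -/
theorem log_tSeq_asymptotic :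
    Filter.Tendsto (fun n : ℕ => Real.log (tSeq n) / (Real.log n ^ 2 / Real.log 2))
      Filter.atTop (nhds 1) := by
  have h0 : Tendsto (fun n : ℕ => Real.log (Real.log n) / Real.log n) atTop (nhds 0) := by
    have h1 : Tendsto (fun x : ℝ => Real.log x / x) atTop (nhds 0) := by
      have := Real.isLittleO_log_id_atTop.tendsto_div_nhds_zero
      simpa using this
    have h2 : Tendsto (fun n : ℕ => Real.log n) atTop atTop :=
      Real.tendsto_log_atTop.comp tendsto_natCast_atTop_atTop
    exact h1.comp h2
  have hb : Tendsto (fun n : ℕ => 20 * Real.log 2 * (Real.log (Real.log n) / Real.log n))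
      atTop (nhds 0) := by
    have := h0.const_mul (20 * Real.log 2)
    simpa using this
  have hdiff : Tendsto
      (fun n : ℕ => Real.log (tSeq n) / (Real.log n ^ 2 / Real.log 2) - 1)
      atTop (nhds 0) := by
    apply squeeze_zero_norm' ?_ hb
    filter_upwards [key_bound, eventually_ge_atTop (2^100)] with n hk hn
    have hn2 : (2:ℝ) ≤ (n:ℝ) := by
      have : (2:ℕ) ≤ n := le_trans (by norm_num) hn
      exact_mod_cast this
    have hL : 0 < Real.log n := Real.log_pos (by linarith)
    have hlam : 0 < Real.log 2 := Real.log_pos (by norm_num)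
    have hg : 0 < Real.log n ^ 2 / Real.log 2 := by positivity
    have e1 : Real.log (tSeq n) / (Real.log n ^ 2 / Real.log 2) - 1
        = (Real.log (tSeq n) - Real.log n ^ 2 / Real.log 2) / (Real.log n ^ 2 / Real.log 2) := by
      field_simp
    rw [Real.norm_eq_abs, e1, abs_div, abs_of_pos hg]
    calc |Real.log (tSeq n) - Real.log n ^ 2 / Real.log 2| / (Real.log n ^ 2 / Real.log 2)
        ≤ (20 * Real.log n * Real.log (Real.log n)) / (Real.log n ^ 2 / Real.log 2) :=
          (div_le_div_iff_of_pos_right hg).mpr hk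
      _ = 20 * Real.log 2 * (Real.log (Real.log n) / Real.log n) := by
          field_simp
  have := hdiff.add_const 1
  simpa using this
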